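/- arXiv:1705.07701 — 2 statements merged into one kernel-verified Lean document; each statement's English description precedes it below -/
import Mathlib

section
/- Let 𝔽 ⊆ ℂ be a number field and L ⊆ ℂ a number field containing the Galois closure 𝔽^Gal of 𝔽/ℚ. Let x, y : Aut(ℂ) → ℂ be families with y(σ) ≠ 0 for all σ, such that x(σ) and y(σ) depend only on the restriction σ|_L, and such that σ(x(τ)/y(τ)) = x(στ)/y(στ) for all σ ∈ Aut(ℂ/𝔽) and all τ ∈ Aut(ℂ). Then for every σ₀ ∈ Aut(ℂ) one has x(σ₀)/y(σ₀) ∈ σ₀(L). -/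
set_option maxHeartbeats 2000000
set_option synthInstance.maxHeartbeats 1000000

/-- Any ring automorphism of the polynomial algebra over a subfield-base of `ℂ`
generated by a transcendence basis extends to a ring automorphism of `ℂ`. -/
lemma minimizing_key_ext (F : Type*) [Field F] [Algebra F ℂ] {s : Set ℂ}
    (hbasis : IsTranscendenceBasis F ((↑) : s → ℂ))
    (ψ : MvPolynomial s F ≃+* MvPolynomial s F) :
    ∃ σ : ℂ ≃+* ℂ, ∀ p : MvPolynomial s F,
      σ (MvPolynomial.aeval ((↑) : s → ℂ) p) = MvPolynomial.aeval ((↑) : s → ℂ) (ψ p) := by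
  letI := IsAlgClosed.isAlgClosure_of_transcendence_basis _ hbasis
  let e := (hbasis.1.aevalEquiv.symm.toRingEquiv.trans ψ).trans hbasis.1.aevalEquiv.toRingEquiv
  refine ⟨IsAlgClosure.equivOfEquiv ℂ ℂ e, fun p => ?_⟩
  rw [← hbasis.1.algebraMap_aevalEquiv, IsAlgClosure.equivOfEquiv_algebraMap,
    ← hbasis.1.algebraMap_aevalEquiv]
  congr 1
  show hbasis.1.aevalEquiv (ψ (hbasis.1.aevalEquiv.symm (hbasis.1.aevalEquiv p))) = _
  rw [AlgEquiv.symm_apply_apply]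

open Polynomial in
/-- If `w` is algebraic over `L` but not in `L`, there is an `L`-automorphism of the
algebraic closure of `L` in `ℂ` moving `w`. -/
lemma minimizing_part1 (L : Subfield ℂ) (w : ℂ) (halg : IsAlgebraic ↥L w) (hwL : w ∉ L) :
    ∃ σE : (algebraicClosure ↥L ℂ) ≃ₐ[↥L] (algebraicClosure ↥L ℂ),
      σE ⟨w, mem_algebraicClosure_iff.2 halg⟩ ≠ ⟨w, mem_algebraicClosure_iff.2 halg⟩ := by
  set E := algebraicClosure ↥L ℂ with hE
  haveI : IsAlgClosed ↥E := (algebraicClosure.isAlgClosure ↥L ℂ).isAlgClosed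
  haveI : Normal ↥L ↥E := @IsAlgClosure.normal ↥L _ _ _ _ (algebraicClosure.isAlgClosure ↥L ℂ)
  set wE : ↥E := ⟨w, mem_algebraicClosure_iff.2 halg⟩ with hwE
  have halgE : IsAlgebraic ↥L wE := Algebra.IsAlgebraic.isAlgebraic wE
  have hint : IsIntegral ↥L wE := halgE.isIntegral
  set p : Polynomial ↥L := minpoly ↥L wE with hp
  have hirr : Irreducible p := minpoly.irreducible hint
  have hsep : p.Separable := hirr.separable
  set P : Polynomial ↥E := p.map (algebraMap ↥L ↥E) with hP
  have hProot : P.IsRoot wE := by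
    rw [hP, IsRoot, eval_map, ← aeval_def, minpoly.aeval]
  have hPne : P ≠ 0 := by
    simpa [hP, Polynomial.map_eq_zero] using minpoly.ne_zero hint
  have hdeg1 : p.natDegree ≠ 1 := by
    intro h1
    obtain ⟨z, hz⟩ := (minpoly.natDegree_eq_one_iff).1 h1
    apply hwL
    have h2 : (algebraMap ↥L ↥E z : ℂ) = w := by rw [hz]
    have h3 : (algebraMap ↥L ↥E z : ℂ) = (z : ℂ) := rfl
    rw [← h2, h3]; exact z.2
  have hdegP : 1 < P.natDegree := by
    rw [hP, natDegree_map]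
    rcases Nat.lt_or_ge 1 p.natDegree with h | h
    · exact h
    · exact absurd (Nat.le_antisymm h (minpoly.natDegree_pos hint)) hdeg1
  obtain ⟨Q, hQ⟩ := (dvd_iff_isRoot).2 hProot
  have hQne : Q ≠ 0 := by rintro rfl; simp at hQ; exact hPne hQ
  have hQdeg : 0 < Q.natDegree := by
    have h4 := natDegree_mul (p := X - C wE) (q := Q) (by exact X_sub_C_ne_zero wE) hQne
    rw [← hQ, natDegree_X_sub_C] at h4
    omega
  obtain ⟨w', hw'⟩ := IsAlgClosed.exists_root Q (by
    rw [degree_eq_natDegree hQne]; exact_mod_cast hQdeg.ne')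
  have hw'root : P.IsRoot w' := by rw [hQ]; simp [IsRoot] at hw' ⊢; right; exact hw'
  have hw'ne : w' ≠ wE := by
    intro h
    rw [h] at hw'
    have hdvd : (X - C wE) * (X - C wE) ∣ P := by
      rw [hQ]
      exact mul_dvd_mul_left _ ((dvd_iff_isRoot).2 hw')
    have hsq : Squarefree P := hsep.map.squarefree
    exact Polynomial.not_isUnit_X_sub_C wE (hsq _ hdvd)
  have h_ev : (Polynomial.aeval w') (minpoly ↥L wE) = 0 := by
    rw [aeval_def, ← eval_map, ← hP]; exact hw'root
  obtain ⟨σE, hσE⟩ := minpoly.exists_algEquiv_of_root' halgE h_ev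
  exact ⟨σE, by rw [hσE]; exact hw'ne⟩

open MvPolynomial in
/-- translation automorphism of a multivariate polynomial ring: `X i₀ ↦ X i₀ + 1` -/
noncomputable def minimizingTranslationEquiv (F : Type*) [CommRing F] (ι : Type*)
    [DecidableEq ι] (i₀ : ι) :
    MvPolynomial ι F ≃ₐ[F] MvPolynomial ι F :=
  AlgEquiv.ofAlgHom
    (aeval fun i => if i = i₀ then X i₀ + 1 else X i)
    (aeval fun i => if i = i₀ then X i₀ - 1 else X i)
    (by apply MvPolynomial.algHom_ext; intro j
        by_cases hj : j = i₀ <;> simp [hj])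
    (by apply MvPolynomial.algHom_ext; intro j
        by_cases hj : j = i₀ <;> simp [hj])

open MvPolynomial in
lemma minimizing_case_transc (L : Subfield ℂ) (w : ℂ) (hw : Transcendental ↥L w) :
    ∃ σ : ℂ ≃+* ℂ, (∀ z ∈ L, σ z = z) ∧ σ w ≠ w := by
  classical
  have h1 : AlgebraicIndependent ↥L ((↑) : ({w} : Set ℂ) → ℂ) := by
    rw [algebraicIndependent_unique_type_iff]
    exact hw
  obtain ⟨s, hws, hmax⟩ := exists_maximal_algebraicIndependent {w} Set.univ (Set.subset_univ _) h1
  have hbasis : IsTranscendenceBasis ↥L ((↑) : s → ℂ) := by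
    refine ⟨hmax.prop.1, fun t ht hst => ?_⟩
    simp only [Subtype.range_coe_subtype, Set.setOf_mem_eq] at *
    exact hmax.eq_of_le ⟨ht, Set.subset_univ _⟩ hst
  have hwsmem : w ∈ s := hws rfl
  set iw : s := ⟨w, hwsmem⟩
  obtain ⟨σ, hσ⟩ := minimizing_key_ext ↥L hbasis (minimizingTranslationEquiv ↥L s iw).toRingEquiv
  refine ⟨σ, fun z hz => ?_, ?_⟩
  · have := hσ (C ⟨z, hz⟩)
    simp only [aeval_C] at this
    have hC : (minimizingTranslationEquiv ↥L s iw).toRingEquiv (C ⟨z, hz⟩) = C ⟨z, hz⟩ := by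
      simp [minimizingTranslationEquiv]
    rw [hC, aeval_C] at this
    exact this
  · have := hσ (X iw)
    have hX : (minimizingTranslationEquiv ↥L s iw).toRingEquiv (X iw) = X iw + 1 := by
      simp [minimizingTranslationEquiv]
    rw [hX] at this
    simp only [aeval_X, map_add, map_one] at this
    rw [this]
    show ¬ (w + 1 = w)
    simp

open MvPolynomial in
lemma minimizing_case_alg (L : Subfield ℂ) (w : ℂ) (halg : IsAlgebraic ↥L w) (hwL : w ∉ L) :
    ∃ σ : ℂ ≃+* ℂ, (∀ z ∈ L, σ z = z) ∧ σ w ≠ w := by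
  classical
  set E := algebraicClosure ↥L ℂ with hE
  obtain ⟨σE, hσE⟩ := minimizing_part1 L w halg hwL
  set wE : ↥E := ⟨w, mem_algebraicClosure_iff.2 halg⟩ with hwE
  obtain ⟨s, hbasis⟩ := exists_isTranscendenceBasis ↥E
    ℂ
  obtain ⟨σ, hσ⟩ := minimizing_key_ext ↥E hbasis (MvPolynomial.mapEquiv s σE.toRingEquiv)
  have hconst : ∀ u : ↥E, σ (u : ℂ) = ((σE u : ↥E) : ℂ) := by
    intro u
    have := hσ (C u)
    simp only [aeval_C, MvPolynomial.mapEquiv_apply, map_C] at this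
    exact this
  refine ⟨σ, fun z hz => ?_, ?_⟩
  · set u : ↥E := algebraMap ↥L ↥E ⟨z, hz⟩ with hu
    have h1 : (u : ℂ) = z := rfl
    have h2 : σE u = u := σE.commutes ⟨z, hz⟩
    rw [← h1, hconst u, h2]
  · have := hconst wE
    have h2 : (wE : ℂ) = w := rfl
    rw [h2] at this
    rw [this]
    intro h
    exact hσE (Subtype.ext h)

/-- The fixed "field" of all automorphisms of `ℂ` fixing a subfield `L` pointwise is `L`
itself (char zero). -/
lemma minimizing_mem_of_fixed (L : Subfield ℂ) (w : ℂ)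
    (h : ∀ π : ℂ ≃+* ℂ, (∀ z ∈ L, π z = z) → π w = w) : w ∈ L := by
  by_contra hwL
  by_cases halg : IsAlgebraic ↥L w
  · obtain ⟨σ, hfix, hne⟩ := minimizing_case_alg L w halg hwL
    exact hne (h σ hfix)
  · obtain ⟨σ, hfix, hne⟩ := minimizing_case_transc L w halg
    exact hne (h σ hfix)

/-- The Minimizing Lemma: let `𝔽 ⊆ ℂ` be a number field, `L ⊆ ℂ` a number field
containing the Galois closure of `𝔽/ℚ` (so `𝔽 ≤ L` and `L` is stable under taking
conjugates of elements of `𝔽`, i.e. `σ(𝔽) ⊆ L` for all automorphisms `σ` of `ℂ`).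
Let `x, y : Aut(ℂ) → ℂ` be families with `y σ ≠ 0` for all `σ`, depending only on
the restriction of `σ` to `L`, and satisfying the Galois-equivariance
`σ(x τ / y τ) = x (σ∘τ) / y (σ∘τ)` for all `σ ∈ Aut(ℂ/𝔽)`, `τ ∈ Aut(ℂ)`.
Then `x σ₀ / y σ₀ ∈ σ₀(L)` for every `σ₀ ∈ Aut(ℂ)`. -/
theorem minimizing_lemma (𝔽 L : Subfield ℂ)
    (h𝔽num : FiniteDimensional ℚ 𝔽) (hLnum : FiniteDimensional ℚ L)
    (h𝔽L : 𝔽 ≤ L)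
    (hGal : ∀ (σ : ℂ ≃+* ℂ), ∀ z ∈ 𝔽, σ z ∈ L)
    (x y : (ℂ ≃+* ℂ) → ℂ) (hy : ∀ σ, y σ ≠ 0)
    (hdep : ∀ σ τ : ℂ ≃+* ℂ, (∀ z ∈ L, σ z = τ z) → x σ = x τ ∧ y σ = y τ)
    (hequiv : ∀ σ τ : ℂ ≃+* ℂ, (∀ z ∈ 𝔽, σ z = z) →
      σ (x τ / y τ) = x (τ.trans σ) / y (τ.trans σ)) :
    ∀ σ₀ : ℂ ≃+* ℂ, x σ₀ / y σ₀ ∈ L.map (σ₀ : ℂ →+* ℂ) := by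
  intro σ₀
  set r : ℂ := x σ₀ / y σ₀ with hr
  set w : ℂ := σ₀.symm r with hw
  have hwmem : w ∈ L := by
    apply minimizing_mem_of_fixed
    intro π hπ
    set σ : ℂ ≃+* ℂ := (σ₀.symm.trans π).trans σ₀ with hσdef
    have hσ𝔽 : ∀ z ∈ 𝔽, σ z = z := by
      intro z hz
      have h1 : σ₀.symm z ∈ L := hGal σ₀.symm z hz
      have : σ z = σ₀ (π (σ₀.symm z)) := rfl
      rw [this, hπ _ h1, RingEquiv.apply_symm_apply]
    have hkey := hequiv σ σ₀ hσ𝔽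
    have hagree : ∀ z ∈ L, (σ₀.trans σ) z = σ₀ z := by
      intro z hz
      have : (σ₀.trans σ) z = σ₀ (π (σ₀.symm (σ₀ z))) := rfl
      rw [this, RingEquiv.symm_apply_apply, hπ z hz]
    obtain ⟨hx', hy'⟩ := hdep (σ₀.trans σ) σ₀ hagree
    rw [hx', hy', ← hr] at hkey
    -- hkey : σ r = r
    have h2 : σ r = σ₀ (π w) := by
      rw [hw]; rfl
    rw [h2] at hkey
    have := congrArg σ₀.symm hkey
    rwa [RingEquiv.symm_apply_apply] at this
  refine ⟨w, hwmem, ?_⟩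
  rw [hw]
  exact σ₀.apply_symm_apply r
end

section
/- Let m ≥ 1 and n = lm with n odd (so l and m are odd). Let t : ℤ → ℂ^× be m-periodic (t_{i+m} = t_i for all i), and let X be an indeterminate. Then ∏_{k=1}^{(n−1)/2} ∏_{i=1}^{m} (1 − t_i t_{i+k}^{−1} X)(1 − t_i^{−1} t_{i+k} X) · (1 − X)^m = ∏_{i=1}^{m} ∏_{j=1}^{m} (1 − t_i t_j^{−1} X)^l. -/
open Finset

section Aux

variable {M : Type*} [CommMonoid M]

private lemma per_mul {F : ℤ → M} {m : ℕ} (h : ∀ i : ℤ, F (i + m) = F i) :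
    ∀ (c i : ℤ), F (i + c * m) = F i := by
  intro c
  induction c using Int.induction_on with
  | zero => simp
  | succ k ih =>
      intro i
      have he : i + (k + 1 : ℤ) * m = (i + k * m) + m := by ring
      rw [he, h, ih]
  | pred k ih =>
      intro i
      have he : (i + (-(k:ℤ) - 1) * m) + m = i + (-(k:ℤ)) * m := by ring
      have h2 := h (i + (-(k:ℤ) - 1) * m)
      rw [he] at h2
      rw [← h2, ih]

private lemma Icc_eq_Ico' (a b : ℤ) : Icc a b = Ico a (b + 1) := by
  ext x; simp only [mem_Icc, mem_Ico]; omega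

private lemma prod_Ico_eq_zmod (F : ℤ → M) (m : ℕ) [NeZero m] (hm : 1 ≤ m)
    (h : ∀ i : ℤ, F (i + m) = F i) (a : ℤ) :
    ∏ i ∈ Ico a (a + m), F i = ∏ x : ZMod m, F ((x.val : ℤ)) := by
  have hm' : (0 : ℤ) < (m : ℤ) := by exact_mod_cast hm
  refine prod_nbij' (fun i => (i : ZMod m))
      (fun x => a + (((x.val : ℤ) - a) % (m : ℤ))) ?_ ?_ ?_ ?_ ?_
  · intro i _; exact mem_univ _
  · intro x _
    have h1 : 0 ≤ ((x.val : ℤ) - a) % (m : ℤ) := Int.emod_nonneg _ (by omega)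
    have h2 : ((x.val : ℤ) - a) % (m : ℤ) < m := Int.emod_lt_of_pos _ hm'
    simp only [mem_Ico]; omega
  · intro i hi
    simp only [mem_Ico] at hi
    show a + ((((i : ZMod m).val : ℤ) - a) % (m : ℤ)) = i
    have hv : (((i : ZMod m).val : ℤ)) = i % m := ZMod.val_intCast i
    rw [hv]
    have he : (i % (m : ℤ) - a) % (m : ℤ) = (i - a) % (m : ℤ) := by
      rw [Int.sub_emod, Int.emod_emod_of_dvd i dvd_rfl, ← Int.sub_emod]
    rw [he, Int.emod_eq_of_lt (by omega) (by omega)]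
    omega
  · intro x _
    show ((a + (((x.val : ℤ) - a) % (m : ℤ)) : ℤ) : ZMod m) = x
    push_cast
    simp
  · intro i _
    show F i = F (((i : ZMod m).val : ℤ))
    have hv : (((i : ZMod m).val : ℤ)) = i % m := ZMod.val_intCast i
    rw [hv]
    have hd : i = i % m + (i / m) * m := by
      rw [Int.emod_def]; ring
    conv_lhs => rw [hd]
    exact per_mul h _ _

private lemma prod_Ico_shift_eq (F : ℤ → M) (m : ℕ) (hm : 1 ≤ m)
    (h : ∀ i : ℤ, F (i + m) = F i) (a b : ℤ) :
    ∏ i ∈ Ico a (a + m), F i = ∏ i ∈ Ico b (b + m), F i := by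
  haveI : NeZero m := ⟨by omega⟩
  rw [prod_Ico_eq_zmod F m hm h a, prod_Ico_eq_zmod F m hm h b]

private lemma prod_Ico_pow (F : ℤ → M) (m : ℕ) (hm : 1 ≤ m)
    (h : ∀ i : ℤ, F (i + m) = F i) (a : ℤ) (l : ℕ) :
    ∏ i ∈ Ico a (a + (l * m : ℕ)), F i = (∏ i ∈ Ico a (a + m), F i) ^ l := by
  induction l with
  | zero => simp
  | succ l ih =>
      have hsplit : (∏ i ∈ Ico a (a + (l * m : ℕ)), F i) *
          ∏ i ∈ Ico (a + (l * m : ℕ)) (a + ((l + 1) * m : ℕ)), F i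
          = ∏ i ∈ Ico a (a + ((l + 1) * m : ℕ)), F i := by
        rw [← prod_union (Ico_disjoint_Ico_consecutive _ _ _),
          Ico_union_Ico_eq_Ico (by omega) (by push_cast; nlinarith)]
      have hlast : ∏ i ∈ Ico (a + (l * m : ℕ)) (a + ((l + 1) * m : ℕ)), F i
          = ∏ i ∈ Ico a (a + m), F i := by
        have he : (a + ((l + 1) * m : ℕ) : ℤ) = (a + (l * m : ℕ)) + m := by push_cast; ring
        rw [he]
        exact prod_Ico_shift_eq F m hm h _ a
      rw [← hsplit, ih, hlast, pow_succ]

private lemma prod_nat_cast_Icc (F : ℤ → M) (K : ℕ) :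
    ∏ k ∈ Icc 1 K, F (k : ℤ) = ∏ k ∈ Icc (1 : ℤ) (K : ℤ), F k := by
  refine prod_nbij' (fun k => (k : ℤ)) (fun k => k.toNat) ?_ ?_ ?_ ?_ ?_
  · intro k hk; simp only [mem_Icc] at hk ⊢; omega
  · intro k hk; simp only [mem_Icc] at hk ⊢; omega
  · intro k _; show ((k : ℤ)).toNat = k; omega
  · intro k hk; simp only [mem_Icc] at hk; show ((k.toNat : ℤ)) = k; omega
  · intro k _; rfl

private lemma prod_neg_Icc (F : ℤ → M) (K : ℕ) :
    ∏ k ∈ Icc (1 : ℤ) (K : ℤ), F (-k) = ∏ k ∈ Icc (-(K : ℤ)) (-1 : ℤ), F k := by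
  refine prod_nbij' (fun k => -k) (fun k => -k) ?_ ?_ ?_ ?_ ?_
  · intro k hk; simp only [mem_Icc] at hk ⊢; omega
  · intro k hk; simp only [mem_Icc] at hk ⊢; omega
  · intro k _; show -(-k) = k; ring
  · intro k _; show -(-k) = k; ring
  · intro k _; rfl

end Aux

/-- Euler factor identity at a split place for the Asai L-function of an
automorphically induced representation, `n = l·m` odd: for an `m`-periodic family
of nonzero complex numbers `t`,
`∏_{k=1}^{(n−1)/2} ∏_{i=1}^{m} (1 − t_i t_{i+k}^{−1} X)(1 − t_i^{−1} t_{i+k} X) · (1 − X)^m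
  = ∏_{i=1}^{m} ∏_{j=1}^{m} (1 − t_i t_j^{−1} X)^l` in `ℂ[X]`. -/
theorem split_place_asai_isobaric_identity (l m n : ℕ) (hm : 1 ≤ m)
    (hn : n = l * m) (hodd : Odd n) (t : ℤ → ℂ)
    (ht0 : ∀ i, t i ≠ 0) (hper : ∀ i : ℤ, t (i + (m : ℤ)) = t i) :
    (∏ k ∈ Finset.Icc 1 ((n - 1) / 2), ∏ i ∈ Finset.Icc (1 : ℤ) (m : ℤ),
        ((1 - Polynomial.C (t i * (t (i + (k : ℤ)))⁻¹) * Polynomial.X) *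
          (1 - Polynomial.C ((t i)⁻¹ * t (i + (k : ℤ))) * Polynomial.X))) *
      (1 - Polynomial.X) ^ m =
    ∏ i ∈ Finset.Icc (1 : ℤ) (m : ℤ), ∏ j ∈ Finset.Icc (1 : ℤ) (m : ℤ),
      (1 - Polynomial.C (t i * (t j)⁻¹) * Polynomial.X) ^ l := by
  classical
  set K : ℕ := (n - 1) / 2 with hK
  set term : ℤ → ℤ → Polynomial ℂ :=
    fun i j => 1 - Polynomial.C (t i * (t j)⁻¹) * Polynomial.X with hterm
  set g : ℤ → Polynomial ℂ := fun d => ∏ i ∈ Icc (1 : ℤ) (m : ℤ), term i (i + d) with hg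
  have hn1 : 1 ≤ n := hodd.pos
  have h2K : n = 2 * K + 1 := by
    obtain ⟨r, hr⟩ := hodd; omega
  -- g is m-periodic
  have hperg : ∀ d : ℤ, g (d + m) = g d := by
    intro d
    refine Finset.prod_congr rfl fun i _ => ?_
    have he : i + (d + m) = (i + d) + m := by ring
    simp only [hterm]
    rw [he, hper]
  -- g 0 = (1 - X)^m
  have hg0 : g 0 = (1 - Polynomial.X) ^ m := by
    show ∏ i ∈ Icc (1 : ℤ) (m : ℤ), term i (i + 0) = (1 - Polynomial.X) ^ m
    have he : ∀ i ∈ Icc (1 : ℤ) (m : ℤ),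
        term i (i + 0) = 1 - Polynomial.X := by
      intro i _
      simp only [hterm, add_zero]
      rw [mul_inv_cancel₀ (ht0 i), map_one, one_mul]
    rw [Finset.prod_congr rfl he, Finset.prod_const, Int.card_Icc]
    congr 1
    omega
  -- the second Euler factor equals g (-k)
  have hneg : ∀ k : ℤ,
      ∏ i ∈ Icc (1 : ℤ) (m : ℤ),
        (1 - Polynomial.C ((t i)⁻¹ * t (i + k)) * Polynomial.X) = g (-k) := by
    intro k
    have hH : ∀ i : ℤ, term (i + m) ((i + m) + -k) = term i (i + -k) := by
      intro i
      simp only [hterm]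
      have h1 : (i + (m : ℤ)) + -k = (i + -k) + m := by ring
      rw [h1, hper, hper]
    have hshift := prod_Ico_shift_eq (fun i => term i (i + -k)) m hm hH 1 (1 + k)
    have h2 : (1 + k + (m : ℤ)) = (1 + m) + k := by ring
    rw [h2] at hshift
    rw [hg]
    simp only
    rw [Icc_eq_Ico', show ((m : ℤ) + 1) = 1 + m by ring, hshift,
      ← Finset.prod_Ico_add' (fun i => term i (i + -k)) 1 (1 + (m : ℤ)) k,
      ← show ((m : ℤ) + 1) = 1 + m by ring, ← Icc_eq_Ico']
    refine Finset.prod_congr rfl fun i _ => ?_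
    simp only [hterm]
    have h3 : i + k + -k = i := by ring
    rw [h3, mul_comm ((t i)⁻¹) (t (i + k))]
  -- rewrite the LHS double product
  have hLHS1 : ∀ k : ℕ,
      ∏ i ∈ Finset.Icc (1 : ℤ) (m : ℤ),
        ((1 - Polynomial.C (t i * (t (i + (k : ℤ)))⁻¹) * Polynomial.X) *
          (1 - Polynomial.C ((t i)⁻¹ * t (i + (k : ℤ))) * Polynomial.X))
      = g (k : ℤ) * g (-(k : ℤ)) := by
    intro k
    rw [Finset.prod_mul_distrib, hneg (k : ℤ)]
  calc
    (∏ k ∈ Finset.Icc 1 K, ∏ i ∈ Finset.Icc (1 : ℤ) (m : ℤ),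
        ((1 - Polynomial.C (t i * (t (i + (k : ℤ)))⁻¹) * Polynomial.X) *
          (1 - Polynomial.C ((t i)⁻¹ * t (i + (k : ℤ))) * Polynomial.X))) *
      (1 - Polynomial.X) ^ m
      = (∏ k ∈ Finset.Icc 1 K, g (k : ℤ) * g (-(k : ℤ))) * g 0 := by
        rw [hg0, Finset.prod_congr rfl fun k _ => hLHS1 k]
    _ = ((∏ k ∈ Finset.Icc (1 : ℤ) (K : ℤ), g k) *
          (∏ k ∈ Finset.Icc (-(K : ℤ)) (-1 : ℤ), g k)) * g 0 := by
        rw [Finset.prod_mul_distrib,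
          prod_nat_cast_Icc (fun k => g k) K,
          prod_nat_cast_Icc (fun k => g (-k)) K,
          prod_neg_Icc g K]
    _ = ∏ k ∈ Ico (-(K : ℤ)) (-(K : ℤ) + (n : ℕ)), g k := by
        have hsplit1 : (∏ k ∈ Ico (-(K : ℤ)) 0, g k) * ∏ k ∈ Ico (0 : ℤ) 1, g k
            = ∏ k ∈ Ico (-(K : ℤ)) 1, g k := by
          rw [← prod_union (Ico_disjoint_Ico_consecutive _ _ _),
            Ico_union_Ico_eq_Ico (by omega) (by omega)]
        have hsplit2 : (∏ k ∈ Ico (-(K : ℤ)) 1, g k) * ∏ k ∈ Ico (1 : ℤ) ((K : ℤ) + 1), g k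
            = ∏ k ∈ Ico (-(K : ℤ)) ((K : ℤ) + 1), g k := by
          rw [← prod_union (Ico_disjoint_Ico_consecutive _ _ _),
            Ico_union_Ico_eq_Ico (by omega) (by omega)]
        have hIco01 : ∏ k ∈ Ico (0 : ℤ) 1, g k = g 0 := by
          rw [show Ico (0 : ℤ) 1 = {0} by ext x; simp [mem_Ico]; omega,
            Finset.prod_singleton]
        have hend : (-(K : ℤ) + (n : ℕ)) = (K : ℤ) + 1 := by
          have : (n : ℤ) = 2 * K + 1 := by exact_mod_cast h2K
          omega
        rw [hend, ← hsplit2, ← hsplit1, hIco01,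
          Icc_eq_Ico' (1 : ℤ) (K : ℤ), Icc_eq_Ico' (-(K : ℤ)) (-1 : ℤ),
          show (-1 : ℤ) + 1 = 0 by ring]
        ring
    _ = (∏ k ∈ Ico (-(K : ℤ)) (-(K : ℤ) + m), g k) ^ l := by
        rw [hn]
        exact prod_Ico_pow g m hm hperg _ l
    _ = (∏ d ∈ Icc (1 : ℤ) (m : ℤ), g d) ^ l := by
        rw [prod_Ico_shift_eq g m hm hperg (-(K : ℤ)) 1,
          Icc_eq_Ico', show ((m : ℤ) + 1) = 1 + m by ring]
    _ = ∏ i ∈ Finset.Icc (1 : ℤ) (m : ℤ), ∏ j ∈ Finset.Icc (1 : ℤ) (m : ℤ),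
          (1 - Polynomial.C (t i * (t j)⁻¹) * Polynomial.X) ^ l := by
        rw [← Finset.prod_pow]
        have hswap : ∏ d ∈ Icc (1 : ℤ) (m : ℤ), g d ^ l
            = ∏ i ∈ Icc (1 : ℤ) (m : ℤ), (∏ d ∈ Icc (1 : ℤ) (m : ℤ), term i (i + d)) ^ l := by
          simp only [hg, ← Finset.prod_pow]
          exact Finset.prod_comm
        rw [hswap]
        refine Finset.prod_congr rfl fun i _ => ?_
        have hHj : ∀ j : ℤ, term i (j + m) = term i j := by
          intro j
          simp only [hterm]
          rw [hper]
        have hshift := prod_Ico_shift_eq (fun j => term i j) m hm hHj (1 + i) 1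
        have hbase : ∏ d ∈ Icc (1 : ℤ) (m : ℤ), term i (i + d)
            = ∏ j ∈ Icc (1 : ℤ) (m : ℤ),
              (1 - Polynomial.C (t i * (t j)⁻¹) * Polynomial.X) := by
          rw [Icc_eq_Ico', show ((m : ℤ) + 1) = 1 + m by ring]
          calc
            ∏ d ∈ Ico (1 : ℤ) (1 + (m : ℤ)), term i (i + d)
                = ∏ d ∈ Ico (1 : ℤ) (1 + (m : ℤ)), term i (d + i) :=
                  Finset.prod_congr rfl fun d _ => by rw [add_comm]
            _ = ∏ j ∈ Ico (1 + i) (1 + (m : ℤ) + i), term i j :=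
                  Finset.prod_Ico_add' (fun j => term i j) 1 (1 + m) i
            _ = ∏ j ∈ Ico (1 : ℤ) (1 + (m : ℤ)), term i j := by
                  rw [show (1 + (m : ℤ) + i) = (1 + i) + m by ring, hshift]
            _ = ∏ j ∈ Ico (1 : ℤ) (1 + (m : ℤ)),
                  (1 - Polynomial.C (t i * (t j)⁻¹) * Polynomial.X) := rfl
        rw [hbase]
        exact (Finset.prod_pow _ _ _).symm
end
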